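/- The partition of the flat cylinder (ℝ/ℤ) × ℝ^{n-1} into q ≥ 3 vertical strips {(x,y) : θ_k < x < θ_{k+1}} (for 0 = θ₀ < θ₁ < … < θ_q = 1) has disconnected union of cell boundaries, each cell open connected with Ω_i = interior(closure(Ω_i)) and closures covering the space, yet there is no partition of {1,…,q} into non-empty I, {ℓ}, J with the space equal to the disjoint union of Ω̄_I, Ω_ℓ and Ω̄_J. Hence the conclusion of the '2-connected partition' theorem fails without simple connectedness. -/

import Mathlib

open Set
open Fin.NatCast Fin.CommRing

section Helpers

local notation "π" => (fun t : ℝ => (t : AddCircle (1:ℝ)))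

private lemma continuous_pi1 : Continuous π := continuous_quotient_mk'

private lemma coe_eq_coe' {x y : ℝ} : (x : AddCircle (1:ℝ)) = y ↔ ∃ n : ℤ, y = x + n := by
  rw [QuotientAddGroup.eq_iff_sub_mem]
  simp only [AddSubgroup.mem_zmultiples_iff, zsmul_eq_mul, mul_one]
  constructor
  · rintro ⟨n, hn⟩; exact ⟨-n, by push_cast; linarith⟩
  · rintro ⟨n, hn⟩; exact ⟨-n, by push_cast; linarith⟩

private lemma mem_coe_image_iff {S : Set ℝ} {x : ℝ} :
    (x : AddCircle (1:ℝ)) ∈ π '' S ↔ ∃ n : ℤ, x + n ∈ S := by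
  constructor
  · rintro ⟨y, hy, hxy⟩
    obtain ⟨n, hn⟩ := coe_eq_coe'.1 hxy.symm
    exact ⟨n, hn ▸ hy⟩
  · rintro ⟨n, hn⟩
    exact ⟨x + n, hn, (coe_eq_coe'.2 ⟨n, rfl⟩).symm⟩

private lemma isOpen_coe_Ioo (a b : ℝ) : IsOpen (π '' Ioo a b) :=
  QuotientAddGroup.isOpenMap_coe _ isOpen_Ioo

private lemma closure_coe_Ioo {a b : ℝ} (h : a < b) :
    closure (π '' Ioo a b) = π '' Icc a b := by
  apply Subset.antisymm
  · apply closure_minimal (image_mono Ioo_subset_Icc_self)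
    exact (isCompact_Icc.image continuous_pi1).isClosed
  · rw [← closure_Ioo h.ne]
    exact image_closure_subset_closure_image continuous_pi1

private lemma interior_coe_Icc {a b : ℝ} (h : a < b) (h1 : b - a < 1) :
    interior (π '' Icc a b) = π '' Ioo a b := by
  apply Subset.antisymm
  · intro x hx
    obtain ⟨y, hy, rfl⟩ := interior_subset hx
    by_contra hne
    have hyIoo : y ∉ Ioo a b := fun hm => hne ⟨y, hm, rfl⟩
    have hcase : y = a ∨ y = b := by
      rcases eq_or_lt_of_le hy.1 with h' | h'
      · exact Or.inl h'.symm
      rcases eq_or_lt_of_le hy.2 with h'' | h''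
      · exact Or.inr h''
      · exact absurd ⟨h', h''⟩ hyIoo
    have hpre : IsOpen (π ⁻¹' interior (π '' Icc a b)) :=
      isOpen_interior.preimage continuous_pi1
    obtain ⟨ε, hε, hball⟩ := Metric.isOpen_iff.1 hpre y hx
    set δ := min (ε/2) ((1 - (b - a))/2) with hδdef
    have hδ0 : 0 < δ := lt_min (by linarith) (by linarith)
    have hδ1 : δ < 1 - (b - a) := lt_of_le_of_lt (min_le_right _ _) (by linarith)
    have hδε : δ < ε := lt_of_le_of_lt (min_le_left _ _) (by linarith)
    rcases hcase with rfl | rfl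
    · have hmem : y - δ ∈ Metric.ball y ε := by
        rw [Metric.mem_ball, Real.dist_eq, show y - δ - y = -δ by ring, abs_neg,
          abs_of_pos hδ0]
        exact hδε
      obtain ⟨n, hn⟩ := mem_coe_image_iff.1 (interior_subset (hball hmem))
      have hn1 : (0:ℝ) < n := by have := hn.1; linarith
      have hn2 : (n:ℝ) < 1 := by have := hn.2; linarith
      have h3 : (1:ℤ) ≤ n := by exact_mod_cast hn1
      have : (1:ℝ) ≤ (n:ℝ) := by exact_mod_cast h3
      linarith
    · have hmem : y + δ ∈ Metric.ball y ε := by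
        rw [Metric.mem_ball, Real.dist_eq, show y + δ - y = δ by ring, abs_of_pos hδ0]
        exact hδε
      obtain ⟨n, hn⟩ := mem_coe_image_iff.1 (interior_subset (hball hmem))
      have hn1 : (n:ℝ) < 0 := by have := hn.2; linarith
      have hn2 : (n:ℝ) > -1 := by have := hn.1; linarith
      have h30 : n < 0 := by exact_mod_cast hn1
      have h3 : n ≤ -1 := by omega
      have : (n:ℝ) ≤ -1 := by exact_mod_cast h3
      linarith
  · exact interior_maximal (image_mono Ioo_subset_Icc_self) (isOpen_coe_Ioo a b)

private lemma coe_Icc_diff {a b : ℝ} (h : a < b) (h1 : b - a < 1) :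
    π '' Icc a b \ π '' Ioo a b = {(a : AddCircle (1:ℝ)), (b : AddCircle (1:ℝ))} := by
  ext x
  constructor
  · rintro ⟨⟨y, hy, rfl⟩, hno⟩
    have : y = a ∨ y = b := by
      rcases eq_or_lt_of_le hy.1 with h' | h'
      · exact Or.inl h'.symm
      rcases eq_or_lt_of_le hy.2 with h'' | h''
      · exact Or.inr h''
      · exact absurd ⟨y, ⟨h', h''⟩, rfl⟩ hno
    rcases this with rfl | rfl
    · exact Or.inl rfl
    · exact Or.inr rfl
  · intro hx
    have hka : (a : AddCircle (1:ℝ)) ∉ π '' Ioo a b := by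
      intro hmem
      obtain ⟨n, hn⟩ := mem_coe_image_iff.1 hmem
      have h1' : (0:ℝ) < n := by have := hn.1; linarith
      have h2' : (n:ℝ) < 1 := by have := hn.2; linarith
      have h3 : (1:ℤ) ≤ n := by exact_mod_cast h1'
      have : (1:ℝ) ≤ (n:ℝ) := by exact_mod_cast h3
      linarith
    have hkb : (b : AddCircle (1:ℝ)) ∉ π '' Ioo a b := by
      intro hmem
      obtain ⟨n, hn⟩ := mem_coe_image_iff.1 hmem
      have h1' : (n:ℝ) < 0 := by have := hn.2; linarith
      have h2' : (n:ℝ) > -1 := by have := hn.1; linarith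
      have h3 : n < 0 := by exact_mod_cast h1'
      have h4 : n ≤ -1 := by omega
      have : (n:ℝ) ≤ -1 := by exact_mod_cast h4
      linarith
    rcases hx with rfl | rfl
    · exact ⟨⟨a, ⟨le_refl a, h.le⟩, rfl⟩, hka⟩
    · exact ⟨⟨b, ⟨h.le, le_refl b⟩, rfl⟩, hkb⟩

private lemma nat_switch (P : ℕ → Prop) : ∀ (d a : ℕ), P a → ¬ P (a + d) →
    ∃ j, a ≤ j ∧ j < a + d ∧ P j ∧ ¬ P (j + 1) := by
  intro d
  induction d with
  | zero => intro a h h'; exact absurd h h'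
  | succ d ih =>
    intro a ha h'
    by_cases hd : P (a + d)
    · exact ⟨a + d, by omega, by omega, hd, by rwa [show a + d + 1 = a + (d+1) by omega]⟩
    · obtain ⟨j, h1, h2, h3, h4⟩ := ih a ha hd
      exact ⟨j, h1, by omega, h3, h4⟩

private lemma exists_strip (q : ℕ) (hq0 : 0 < q) (θ : Fin (q+1) → ℝ)
    (x : ℝ) (hx : x ∈ Icc (θ 0) (θ (Fin.last q))) :
    ∃ k : Fin q, x ∈ Icc (θ k.castSucc) (θ k.succ) := by
  classical
  set F : Finset (Fin q) := Finset.univ.filter (fun k => θ k.castSucc ≤ x) with hF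
  have hne : F.Nonempty := by
    refine ⟨⟨0, hq0⟩, ?_⟩
    simp only [hF, Finset.mem_filter, Finset.mem_univ, true_and]
    have : (⟨0, hq0⟩ : Fin q).castSucc = 0 := rfl
    rw [this]; exact hx.1
  set k := F.max' hne with hk
  have hkmem : k ∈ F := F.max'_mem hne
  have hkle : θ k.castSucc ≤ x := by
    simpa only [hF, Finset.mem_filter, Finset.mem_univ, true_and] using hkmem
  refine ⟨k, hkle, ?_⟩
  by_contra hgt
  push_neg at hgt
  have hsne : k.succ ≠ Fin.last q := by
    intro h
    rw [h] at hgt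
    exact absurd hx.2 (not_le.2 hgt)
  have hlt : k.val + 1 < q := by
    have h1 := k.succ.isLt
    have h2 : k.succ.val ≠ q := by
      intro h
      exact hsne (Fin.ext (by rw [h, Fin.val_last]))
    simp only [Fin.val_succ] at h1 h2
    omega
  set k' : Fin q := ⟨k.val + 1, hlt⟩ with hk'
  have hk'mem : k' ∈ F := by
    simp only [hF, Finset.mem_filter, Finset.mem_univ, true_and]
    have : k'.castSucc = k.succ := rfl
    rw [this]; exact hgt.le
  have h5 := F.le_max' k' hk'mem
  rw [← hk] at h5
  have h6 : k'.val ≤ k.val := h5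
  simp [hk'] at h6

private lemma fin_one_add_last (q : ℕ) (hq : 3 ≤ q) :
    haveI : NeZero q := ⟨by omega⟩
    (1 + (⟨q-1, by omega⟩ : Fin q) : Fin q) = 0 := by
  haveI : NeZero q := ⟨by omega⟩
  apply Fin.ext
  simp only [Fin.val_add, Fin.val_one', Fin.val_zero]
  rw [Nat.mod_eq_of_lt (show 1 < q by omega)]
  rw [show 1 + (q-1) = q by omega, Nat.mod_self]

private lemma fin_succ_eq (q : ℕ) (hq : 3 ≤ q) (k : Fin q) (hk : k.val + 1 < q) :
    haveI : NeZero q := ⟨by omega⟩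
    ((k + 1 : Fin q)).castSucc = k.succ := by
  haveI : NeZero q := ⟨by omega⟩
  apply Fin.ext
  simp [Fin.val_add, Fin.val_one', Nat.mod_eq_of_lt (show 1 < q by omega),
    Nat.mod_eq_of_lt hk]

private lemma fin_wrap (q : ℕ) (hq : 3 ≤ q) (k : Fin q) (hk : ¬ (k.val + 1 < q)) :
    haveI : NeZero q := ⟨by omega⟩
    (k + 1 : Fin q) = 0 ∧ k.succ = Fin.last q := by
  haveI : NeZero q := ⟨by omega⟩
  have hkv : k.val = q - 1 := by have := k.isLt; omega
  constructor
  · apply Fin.ext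
    simp only [Fin.val_add, Fin.val_one', Fin.val_zero]
    rw [Nat.mod_eq_of_lt (show 1 < q by omega), hkv, show q-1+1 = q by omega, Nat.mod_self]
  · apply Fin.ext
    simp [Fin.val_succ, hkv, Fin.val_last]; omega

private lemma fin_g_ne (q : ℕ) (hq : 3 ≤ q) (i : ℕ) (hi : i ≤ q - 2) (ℓ : Fin q) :
    haveI : NeZero q := ⟨by omega⟩
    (ℓ + 1 + (i : Fin q)) ≠ ℓ := by
  haveI : NeZero q := ⟨by omega⟩
  intro h
  rw [add_assoc] at h
  have h2 : (1 + (i : Fin q) : Fin q) = 0 :=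
    add_left_cancel (a := ℓ) (by rw [h, add_zero])
  rw [Fin.ext_iff] at h2
  simp only [Fin.val_add, Fin.val_one', Fin.val_natCast, Fin.val_zero] at h2
  rw [Nat.mod_eq_of_lt (show 1 < q by omega), Nat.mod_eq_of_lt (show i < q by omega),
    Nat.mod_eq_of_lt (show 1 + i < q by omega)] at h2
  omega

private lemma fin_g_surj (q : ℕ) (hq : 3 ≤ q) (k ℓ : Fin q) (hkl : k ≠ ℓ) :
    haveI : NeZero q := ⟨by omega⟩
    ∃ i ≤ q - 2, (ℓ + 1 + (i : Fin q)) = k := by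
  haveI : NeZero q := ⟨by omega⟩
  refine ⟨(k - (ℓ+1)).val, ?_, ?_⟩
  · by_contra h
    have hv : (k - (ℓ+1)).val = q - 1 := by have := (k - (ℓ+1)).isLt; omega
    apply hkl
    have h3 : k - (ℓ+1) = ⟨q-1, by omega⟩ := Fin.ext hv
    have h2 : k = ℓ + 1 + ⟨q-1, by omega⟩ := by rw [← h3]; ring
    rw [h2, add_assoc, fin_one_add_last q hq, add_zero]
  · rw [Fin.cast_val_eq_self]; ring


theorem cylinder_counterexample
    (m q : ℕ) (hq : 3 ≤ q) (θ : Fin (q+1) → ℝ)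
    (hmono : StrictMono θ) (h0 : θ 0 = 0) (h1 : θ (Fin.last q) = 1) :
    ∀ Ω : Fin q → Set (AddCircle (1:ℝ) × (Fin m → ℝ)),
      (Ω = fun k => {p : AddCircle (1:ℝ) × (Fin m → ℝ) |
        p.1 ∈ (fun t : ℝ => (t : AddCircle (1:ℝ))) '' Ioo (θ k.castSucc) (θ k.succ)}) →
      (¬ IsPreconnected (⋃ k, frontier (Ω k))) ∧
      (∀ k, IsOpen (Ω k) ∧ IsConnected (Ω k) ∧ Ω k = interior (closure (Ω k))) ∧
      (⋃ k, closure (Ω k)) = univ ∧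
      ¬ ∃ (I J : Set (Fin q)) (ℓ : Fin q),
          I.Nonempty ∧ J.Nonempty ∧ ℓ ∉ I ∧ ℓ ∉ J ∧ Disjoint I J ∧
          I ∪ J ∪ {ℓ} = univ ∧
          (univ : Set (AddCircle (1:ℝ) × (Fin m → ℝ)))
            = (⋃ i ∈ I, closure (Ω i)) ∪ Ω ℓ ∪ (⋃ j ∈ J, closure (Ω j)) ∧
          Disjoint (⋃ i ∈ I, closure (Ω i)) (Ω ℓ) ∧
          Disjoint (⋃ j ∈ J, closure (Ω j)) (Ω ℓ) ∧
          Disjoint (⋃ i ∈ I, closure (Ω i)) (⋃ j ∈ J, closure (Ω j)) := by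
  classical
  intro Ω hΩ
  haveI : NeZero q := ⟨by omega⟩
  have hab : ∀ k : Fin q, θ k.castSucc < θ k.succ := fun k => hmono (Fin.castSucc_lt_succ (i := k))
  have hθ0 : ∀ i : Fin (q+1), (0:ℝ) ≤ θ i := fun i => by
    rw [← h0]; exact hmono.monotone (Fin.zero_le _)
  have hθ1 : ∀ i : Fin (q+1), θ i ≤ 1 := fun i => by
    rw [← h1]; exact hmono.monotone (Fin.le_last _)
  have hlen : ∀ k : Fin q, θ k.succ - θ k.castSucc < 1 := by
    intro k
    by_cases hk0 : k.castSucc = 0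
    · have h00 : θ k.castSucc = 0 := by rw [hk0, h0]
      have hlast : k.succ < Fin.last q := by
        rw [Fin.lt_def, Fin.val_succ, Fin.val_last]
        have : k.castSucc.val = 0 := by rw [hk0]; rfl
        rw [Fin.coe_castSucc] at this
        omega
      have : θ k.succ < 1 := by rw [← h1]; exact hmono hlast
      linarith
    · have hpos : (0 : Fin (q+1)) < k.castSucc := by
        rcases (Fin.zero_le k.castSucc).lt_or_eq with h' | h'
        · exact h'
        · exact absurd h'.symm hk0
      have : (0:ℝ) < θ k.castSucc := by rw [← h0]; exact hmono hpos
      have := hθ1 k.succ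
      linarith
  have hΩk : ∀ k, Ω k = ((fun t : ℝ => (t : AddCircle (1:ℝ))) '' Ioo (θ k.castSucc) (θ k.succ))
      ×ˢ (univ : Set (Fin m → ℝ)) := by
    intro k; rw [hΩ]; ext p; simp [Set.mem_prod]
  have hopen : ∀ k, IsOpen (Ω k) := fun k => by
    rw [hΩk k]; exact (isOpen_coe_Ioo _ _).prod isOpen_univ
  have hcl : ∀ k, closure (Ω k) = ((fun t : ℝ => (t : AddCircle (1:ℝ))) ''
      Icc (θ k.castSucc) (θ k.succ)) ×ˢ (univ : Set (Fin m → ℝ)) := by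
    intro k
    rw [hΩk k, closure_prod_eq, closure_univ, closure_coe_Ioo (hab k)]
  have hint : ∀ k, interior (closure (Ω k)) = Ω k := by
    intro k
    rw [hcl k, interior_prod_eq, interior_univ, interior_coe_Icc (hab k) (hlen k), hΩk k]
  have hfr : ∀ k, frontier (Ω k) =
      ({((θ k.castSucc : ℝ) : AddCircle (1:ℝ)), ((θ k.succ : ℝ) : AddCircle (1:ℝ))} : Set _)
        ×ˢ (univ : Set (Fin m → ℝ)) := by
    intro k
    rw [frontier, (hopen k).interior_eq, hcl k, hΩk k, ← coe_Icc_diff (hab k) (hlen k)]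
    ext p
    simp only [mem_diff, Set.mem_prod, mem_univ, and_true]
  refine ⟨?_, ?_, ?_, ?_⟩
  · -- not preconnected
    intro hP
    have hci : q - 1 < q + 1 := by omega
    have hdi : 1 < q + 1 := by omega
    set ci : Fin (q+1) := ⟨q-1, hci⟩ with hcidef
    set di : Fin (q+1) := ⟨1, hdi⟩ with hdidef
    set c := θ ci with hcdef
    set d := θ di with hddef
    have hd0 : (0:ℝ) < d := by
      rw [← h0]
      exact hmono (by rw [Fin.lt_def]; simp [hdidef])
    have hc1 : c < 1 := by
      rw [← h1]
      exact hmono (by rw [Fin.lt_def]; simp [hcidef, Fin.val_last]; omega)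
    have hdc : d ≤ c := hmono.monotone (by rw [Fin.le_def]; simp [hcidef, hdidef]; omega)
    set U : Set (AddCircle (1:ℝ) × (Fin m → ℝ)) :=
      Prod.fst ⁻¹' ((fun t : ℝ => (t : AddCircle (1:ℝ))) '' Ioo (c-1) d) with hUdef
    set V : Set (AddCircle (1:ℝ) × (Fin m → ℝ)) :=
      Prod.fst ⁻¹' ((fun t : ℝ => (t : AddCircle (1:ℝ))) '' Ioo 0 1) with hVdef
    have hUopen : IsOpen U := (isOpen_coe_Ioo _ _).preimage continuous_fst
    have hVopen : IsOpen V := (isOpen_coe_Ioo _ _).preimage continuous_fst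
    have hfst : ∀ p ∈ ⋃ k, frontier (Ω k),
        ∃ i : Fin (q+1), p.1 = ((θ i : ℝ) : AddCircle (1:ℝ)) := by
      intro p hp
      obtain ⟨k, hk⟩ := mem_iUnion.1 hp
      rw [hfr k] at hk
      rcases hk.1 with h' | h'
      · exact ⟨k.castSucc, h'⟩
      · exact ⟨k.succ, h'⟩
    have h0U : ((0:ℝ) : AddCircle (1:ℝ)) ∈
        (fun t : ℝ => (t : AddCircle (1:ℝ))) '' Ioo (c-1) d :=
      mem_coe_image_iff.2 ⟨0, by push_cast; rw [add_zero]; exact ⟨by linarith, hd0⟩⟩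
    have h1U : ((1:ℝ) : AddCircle (1:ℝ)) ∈
        (fun t : ℝ => (t : AddCircle (1:ℝ))) '' Ioo (c-1) d :=
      by
      refine mem_coe_image_iff.2 ⟨-1, ?_⟩
      push_cast
      rw [show (1:ℝ) + -1 = 0 by ring]
      exact ⟨by linarith, hd0⟩
    have hcov : (⋃ k, frontier (Ω k)) ⊆ U ∪ V := by
      intro p hp
      obtain ⟨i, hi⟩ := hfst p hp
      by_cases hi0 : i = 0
      · left
        rw [hUdef, mem_preimage, hi, hi0, h0]
        exact h0U
      · by_cases hil : i = Fin.last q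
        · left
          rw [hUdef, mem_preimage, hi, hil, h1]
          exact h1U
        · right
          rw [hVdef, mem_preimage, hi]
          refine ⟨θ i, ⟨?_, ?_⟩, rfl⟩
          · rw [← h0]; exact hmono (Fin.pos_of_ne_zero hi0)
          · rw [← h1]; exact hmono (lt_of_le_of_ne (Fin.le_last i) hil)
    have hc00 : (0 : Fin q).castSucc = (0 : Fin (q+1)) := rfl
    have hneU : ((⋃ k, frontier (Ω k)) ∩ U).Nonempty := by
      refine ⟨(((θ ((0:Fin q).castSucc) : ℝ) : AddCircle (1:ℝ)), fun _ => 0), ?_, ?_⟩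
      · exact mem_iUnion.2 ⟨0, by rw [hfr 0]; exact ⟨Or.inl rfl, mem_univ _⟩⟩
      · rw [hUdef, mem_preimage]
        show ((θ ((0:Fin q).castSucc) : ℝ) : AddCircle (1:ℝ)) ∈ _
        rw [hc00, h0]
        exact h0U
    have hsd : (0 : Fin q).succ = di := by
      apply Fin.ext
      simp [Fin.val_succ, hdidef]
      omega
    have hneV : ((⋃ k, frontier (Ω k)) ∩ V).Nonempty := by
      refine ⟨(((θ ((0:Fin q).succ) : ℝ) : AddCircle (1:ℝ)), fun _ => 0), ?_, ?_⟩
      · exact mem_iUnion.2 ⟨0, by rw [hfr 0]; exact ⟨Or.inr rfl, mem_univ _⟩⟩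
      · rw [hVdef, mem_preimage]
        show ((θ ((0:Fin q).succ) : ℝ) : AddCircle (1:ℝ)) ∈ _
        rw [hsd]
        exact ⟨d, ⟨hd0, by linarith⟩, rfl⟩
    obtain ⟨x, hxS, hxU, hxV⟩ := hP U V hUopen hVopen hcov hneU hneV
    obtain ⟨i, hi⟩ := hfst x hxS
    have hxV' : ((θ i : ℝ) : AddCircle (1:ℝ)) ∈
        (fun t : ℝ => (t : AddCircle (1:ℝ))) '' Ioo 0 1 := by
      rw [← hi]
      rw [hVdef, mem_preimage] at hxV
      exact hxV
    obtain ⟨n, hn⟩ := mem_coe_image_iff.1 hxV'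
    have hn0 : n = 0 := by
      have l1 : (-1:ℝ) < n := by have := hn.1; have := hθ1 i; linarith
      have l2 : (n:ℝ) < 1 := by have := hn.2; have := hθ0 i; linarith
      have l1' : (-1:ℤ) < n := by exact_mod_cast l1
      have l2' : n < 1 := by exact_mod_cast l2
      omega
    rw [hn0] at hn
    push_cast at hn
    rw [add_zero] at hn
    have hipos : (0 : Fin (q+1)) < i := by
      rw [← hmono.lt_iff_lt, h0]
      exact hn.1
    have hilast : i < Fin.last q := by
      rw [← hmono.lt_iff_lt, h1]
      exact hn.2
    have hdθ : d ≤ θ i := hmono.monotone (by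
      rw [Fin.le_def]
      simp only [hdidef]
      rw [Fin.lt_def] at hipos
      simp at hipos
      omega)
    have hθc : θ i ≤ c := hmono.monotone (by
      rw [Fin.le_def]
      simp only [hcidef]
      rw [Fin.lt_def, Fin.val_last] at hilast
      omega)
    have hxU' : ((θ i : ℝ) : AddCircle (1:ℝ)) ∈
        (fun t : ℝ => (t : AddCircle (1:ℝ))) '' Ioo (c-1) d := by
      rw [← hi]
      rw [hUdef, mem_preimage] at hxU
      exact hxU
    obtain ⟨n', hn'⟩ := mem_coe_image_iff.1 hxU'
    have hneg : (n':ℝ) < 0 := by have := hn'.2; linarith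
    have hneg' : n' < 0 := by exact_mod_cast hneg
    have hle : n' ≤ -1 := by omega
    have hle' : (n':ℝ) ≤ -1 := by exact_mod_cast hle
    have := hn'.1
    linarith
  · -- each cell open, connected, regular-open
    intro k
    refine ⟨hopen k, ?_, (hint k).symm⟩
    rw [hΩk k]
    exact ((isConnected_Ioo (hab k)).image _ continuous_pi1.continuousOn).prod
      (isConnected_univ)
  · -- closures cover
    rw [eq_univ_iff_forall]
    intro p
    haveI : Fact ((0:ℝ) < 1) := ⟨one_pos⟩
    have hsurj := AddCircle.coe_image_Icc_eq (1:ℝ) 0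
    have hp1 : p.1 ∈ QuotientAddGroup.mk '' Icc (0:ℝ) (0+1) := by rw [hsurj]; trivial
    obtain ⟨x, hx, hxp⟩ := hp1
    rw [zero_add] at hx
    have hx' : x ∈ Icc (θ 0) (θ (Fin.last q)) := by rwa [h0, h1]
    obtain ⟨k, hk⟩ := exists_strip q (by omega) θ x hx'
    rw [mem_iUnion]
    refine ⟨k, ?_⟩
    rw [hcl k]
    exact ⟨⟨x, hk, hxp⟩, mem_univ _⟩
  · -- no 2-sided partition
    rintro ⟨I, J, ℓ, hI, hJ, hℓI, hℓJ, hIJdis, hcover, _, _, _, hdisIJ⟩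
    have hadj : ∀ k : Fin q, ∃ x : AddCircle (1:ℝ) × (Fin m → ℝ),
        x ∈ closure (Ω k) ∧ x ∈ closure (Ω (k+1)) := by
      intro k
      refine ⟨(((θ k.succ : ℝ) : AddCircle (1:ℝ)), fun _ => 0), ?_, ?_⟩
      · rw [hcl k]
        exact ⟨⟨θ k.succ, ⟨(hab k).le, le_refl _⟩, rfl⟩, mem_univ _⟩
      · rw [hcl (k+1)]
        by_cases hk : k.val + 1 < q
        · have he : (k+1 : Fin q).castSucc = k.succ := fin_succ_eq q hq k hk
          refine ⟨⟨θ k.succ, ?_, rfl⟩, mem_univ _⟩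
          rw [← he]
          exact ⟨le_refl _, (hab (k+1)).le⟩
        · obtain ⟨hk1, hk2⟩ := fin_wrap q hq k hk
          rw [hk1, hk2, h1]
          refine ⟨mem_coe_image_iff.2 ⟨-1, ?_⟩, mem_univ _⟩
          push_cast
          rw [show (1:ℝ) + -1 = 0 by ring]
          have hc0 : (0:Fin q).castSucc = 0 := rfl
          refine ⟨?_, ?_⟩
          · rw [hc0, h0]
          · have h' := hab 0
            rw [hc0, h0] at h'
            exact h'.le
    have hmemIJ : ∀ k : Fin q, k ≠ ℓ → k ∈ I ∨ k ∈ J := by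
      intro k hk
      have hku : k ∈ I ∪ J ∪ {ℓ} := by rw [hcover]; trivial
      rcases hku with (h' | h') | h'
      · exact Or.inl h'
      · exact Or.inr h'
      · exact absurd h' hk
    obtain ⟨kI, hkI⟩ := hI
    obtain ⟨kJ, hkJ⟩ := hJ
    obtain ⟨i₀, hi₀b, hi₀⟩ := fin_g_surj q hq kI ℓ (fun h => hℓI (h ▸ hkI))
    obtain ⟨i₁, hi₁b, hi₁⟩ := fin_g_surj q hq kJ ℓ (fun h => hℓJ (h ▸ hkJ))
    have hsucc : ∀ j : ℕ, (ℓ + 1 + ((j+1 : ℕ) : Fin q)) = (ℓ + 1 + (j : Fin q)) + 1 := by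
      intro j; push_cast; ring
    have key : ∀ k : Fin q, k ∈ I → (k + 1) ∈ J → False := by
      intro k hkI' hk'J
      obtain ⟨x, hx1, hx2⟩ := hadj k
      exact Set.disjoint_left.1 hdisIJ (mem_biUnion hkI' hx1) (mem_biUnion hk'J hx2)
    have key' : ∀ k : Fin q, k ∈ J → (k + 1) ∈ I → False := by
      intro k hkJ' hk'I
      obtain ⟨x, hx1, hx2⟩ := hadj k
      exact Set.disjoint_left.1 hdisIJ (mem_biUnion hk'I hx2) (mem_biUnion hkJ' hx1)
    rcases lt_trichotomy i₀ i₁ with h | h | h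
    · have hP0 : (ℓ + 1 + (i₀ : Fin q)) ∈ I := hi₀ ▸ hkI
      have hP1 : (ℓ + 1 + (i₁ : Fin q)) ∉ I := fun h' =>
        Set.disjoint_left.1 hIJdis h' (hi₁ ▸ hkJ)
      obtain ⟨j, hj1, hj2, hj3, hj4⟩ := nat_switch (fun j => (ℓ + 1 + (j : Fin q)) ∈ I)
        (i₁ - i₀) i₀ hP0 (by rw [show i₀ + (i₁ - i₀) = i₁ by omega]; exact hP1)
      have hjb : j + 1 ≤ q - 2 := by omega
      have hgj1 : (ℓ + 1 + ((j+1 : ℕ) : Fin q)) ∈ J :=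
        (hmemIJ _ (fin_g_ne q hq (j+1) hjb ℓ)).resolve_left hj4
      rw [hsucc j] at hgj1
      exact key _ hj3 hgj1
    · exact Set.disjoint_left.1 hIJdis (hi₀ ▸ hkI) (by rw [h, hi₁]; exact hkJ)
    · have hP0 : (ℓ + 1 + (i₁ : Fin q)) ∈ J := hi₁ ▸ hkJ
      have hP1 : (ℓ + 1 + (i₀ : Fin q)) ∉ J := fun h' =>
        Set.disjoint_left.1 hIJdis (hi₀ ▸ hkI) h'
      obtain ⟨j, hj1, hj2, hj3, hj4⟩ := nat_switch (fun j => (ℓ + 1 + (j : Fin q)) ∈ J)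
        (i₀ - i₁) i₁ hP0 (by rw [show i₁ + (i₀ - i₁) = i₀ by omega]; exact hP1)
      have hjb : j + 1 ≤ q - 2 := by omega
      have hgj1 : (ℓ + 1 + ((j+1 : ℕ) : Fin q)) ∈ I :=
        (hmemIJ _ (fin_g_ne q hq (j+1) hjb ℓ)).resolve_right hj4
      rw [hsucc j] at hgj1
      exact key' _ hj3 hgj1
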